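/- Let σ : ℝ → ℝ be differentiable with σ'(ℝ) ⊆ [α, 1], 0 < α ≤ 1, A ∈ ℝ^{d×d}, b ∈ ℝ^d, and let φ be the time-1 flow map of u' = σ(Au + b). Define δ⋆ = max over diagonal D with D_ii ∈ [α,1] of μ₂(DA), where μ₂ is the logarithmic 2-norm. Then φ is Lipschitz with constant at most e^{δ⋆}: ‖φ(x) − φ(y)‖₂ ≤ e^{δ⋆}·‖x − y‖₂ for all x, y ∈ ℝ^d. -/

import Mathlib

open Matrix

noncomputable def norm2 {n : ℕ} (v : Fin n → ℝ) : ℝ := Real.sqrt (∑ i, v i ^ 2)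

def inner2 {n : ℕ} (u v : Fin n → ℝ) : ℝ := ∑ i, u i * v i

noncomputable def specNorm {m n : ℕ} (A : Matrix (Fin m) (Fin n) ℝ) : ℝ :=
  ‖LinearMap.toContinuousLinearMap (Matrix.toEuclideanLin A)‖

theorem symPart_isHermitian {n : ℕ} (A : Matrix (Fin n) (Fin n) ℝ) :
    (((1:ℝ)/2) • (A + Aᵀ)).IsHermitian := by
  unfold Matrix.IsHermitian
  ext i j
  simp [Matrix.conjTranspose_apply, Matrix.transpose_apply]
  ring

/-- The logarithmic 2-norm: largest eigenvalue of the symmetric part (A + Aᵀ)/2. -/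
noncomputable def mu2 {n : ℕ} (A : Matrix (Fin n) (Fin n) ℝ) : ℝ :=
  ⨆ i, (symPart_isHermitian A).eigenvalues i

/-- The singular values of A: square roots of the eigenvalues of AᵀA. -/
noncomputable def singVals {m n : ℕ} (A : Matrix (Fin m) (Fin n) ℝ) : Fin n → ℝ :=
  fun i => Real.sqrt ((show (Aᵀ * A).IsHermitian by simpa using Matrix.isHermitian_conjTranspose_mul_self A).eigenvalues i)

/-! ### Auxiliary lemmas -/

lemma inner2_swap {n : ℕ} (S : Matrix (Fin n) (Fin n) ℝ) (hS : S.IsHermitian)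
    (u v : Fin n → ℝ) : inner2 u (S.mulVec v) = inner2 (S.mulVec u) v := by
  have hsymm : ∀ i j, S j i = S i j := fun i j => by
    have := congrFun (congrFun hS i) j
    simpa [Matrix.conjTranspose_apply] using this
  simp only [inner2, Matrix.mulVec, dotProduct, Finset.mul_sum, Finset.sum_mul]
  rw [Finset.sum_comm]
  exact Finset.sum_congr rfl fun i _ => Finset.sum_congr rfl fun j _ => by rw [hsymm i j]; ring

lemma rayleigh {n : ℕ} [Nonempty (Fin n)] (S : Matrix (Fin n) (Fin n) ℝ)
    (hS : S.IsHermitian) (v : Fin n → ℝ) :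
    inner2 v (S.mulVec v) ≤ (⨆ i, hS.eigenvalues i) * inner2 v v := by
  classical
  set b := hS.eigenvectorBasis with hb
  set w : EuclideanSpace ℝ (Fin n) := (WithLp.equiv 2 _).symm v with hw
  set c : Fin n → ℝ := fun j => inner2 (⇑(b j)) v with hc
  have hSb : ∀ j, S.mulVec (⇑(b j)) = hS.eigenvalues j • ⇑(b j) := fun j =>
    hS.mulVec_eigenvectorBasis j
  have hinner : ∀ (x y : Fin n → ℝ),
      (inner ℝ ((WithLp.equiv 2 _).symm x) ((WithLp.equiv 2 _).symm y) : ℝ) = inner2 x y := by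
    intro x y
    simp [PiLp.inner_apply, RCLike.inner_apply, inner2, mul_comm]
  have hrepr : ∀ j, b.repr w j = c j := by
    intro j
    rw [b.repr_apply_apply]
    have : (b j : EuclideanSpace ℝ (Fin n)) = (WithLp.equiv 2 _).symm (⇑(b j)) := rfl
    rw [this, hinner]
  have key : ∀ (y : Fin n → ℝ), inner2 v y = ∑ j, c j * b.repr ((WithLp.equiv 2 _).symm y) j := by
    intro y
    rw [← hinner v y, ← b.repr.inner_map_map w ((WithLp.equiv 2 _).symm y)]
    simp only [PiLp.inner_apply, RCLike.inner_apply, starRingEnd_apply, star_trivial, hrepr]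
    exact Finset.sum_congr rfl fun j _ => mul_comm _ _
  have hreprS : ∀ j, b.repr ((WithLp.equiv 2 _).symm (S.mulVec v)) j = hS.eigenvalues j * c j := by
    intro j
    rw [b.repr_apply_apply]
    have h1 : (b j : EuclideanSpace ℝ (Fin n)) = (WithLp.equiv 2 _).symm (⇑(b j)) := rfl
    rw [h1, hinner, inner2_swap S hS, hSb j]
    simp only [inner2, Pi.smul_apply, smul_eq_mul, Finset.mul_sum, mul_assoc, hc]
  have h1 : inner2 v (S.mulVec v) = ∑ j, hS.eigenvalues j * (c j * c j) := by
    rw [key]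
    exact Finset.sum_congr rfl fun j _ => by rw [hreprS j]; ring
  have h2 : inner2 v v = ∑ j, c j * c j := by
    rw [key]
    exact Finset.sum_congr rfl fun j _ => by rw [hrepr j]
  rw [h1, h2, Finset.mul_sum]
  refine Finset.sum_le_sum fun j _ => ?_
  have hbdd : BddAbove (Set.range hS.eigenvalues) := (Set.finite_range _).bddAbove
  have hle : hS.eigenvalues j ≤ ⨆ i, hS.eigenvalues i := le_ciSup hbdd j
  have : 0 ≤ c j * c j := mul_self_nonneg _
  nlinarith

lemma quad_le_mu2 {n : ℕ} [Nonempty (Fin n)] (M : Matrix (Fin n) (Fin n) ℝ) (v : Fin n → ℝ) :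
    inner2 v (M.mulVec v) ≤ mu2 M * inner2 v v := by
  have ht : inner2 v (Mᵀ.mulVec v) = inner2 v (M.mulVec v) := by
    simp only [inner2, Matrix.mulVec, dotProduct, Finset.mul_sum, Matrix.transpose_apply]
    rw [Finset.sum_comm]
    exact Finset.sum_congr rfl fun i _ => Finset.sum_congr rfl fun j _ => by ring
  have hpt : ∀ i, v i * ((((1:ℝ)/2) • (M + Mᵀ)).mulVec v i)
      = 1/2 * (v i * M.mulVec v i) + 1/2 * (v i * Mᵀ.mulVec v i) := fun i => by
    simp only [Matrix.smul_mulVec, Matrix.add_mulVec, Pi.smul_apply, Pi.add_apply,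
      smul_eq_mul]
    ring
  have hsym : inner2 v ((((1:ℝ)/2) • (M + Mᵀ)).mulVec v) = inner2 v (M.mulVec v) := by
    simp only [inner2] at ht ⊢
    rw [Finset.sum_congr rfl (fun i _ => hpt i), Finset.sum_add_distrib, ← Finset.mul_sum,
      ← Finset.mul_sum, ht]
    ring
  have h0 := rayleigh _ (symPart_isHermitian M) v
  rw [hsym] at h0
  exact h0

lemma slope_exists (σ : ℝ → ℝ) (α : ℝ) (hdiff : Differentiable ℝ σ)
    (hσ' : ∀ t : ℝ, deriv σ t ∈ Set.Icc α 1) (x y : ℝ) :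
    ∃ k, k ∈ Set.Icc α 1 ∧ σ y - σ x = k * (y - x) := by
  rcases lt_trichotomy x y with h | h | h
  · obtain ⟨c, _, hc⟩ := exists_deriv_eq_slope σ h hdiff.continuous.continuousOn
      hdiff.differentiableOn
    exact ⟨deriv σ c, hσ' c, by rw [hc, div_mul_cancel₀ _ (sub_ne_zero.mpr h.ne')]⟩
  · exact ⟨α, ⟨le_refl _, (hσ' 0).1.trans (hσ' 0).2⟩, by rw [h]; ring⟩
  · obtain ⟨c, _, hc⟩ := exists_deriv_eq_slope σ h hdiff.continuous.continuousOn
      hdiff.differentiableOn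
    refine ⟨deriv σ c, hσ' c, ?_⟩
    have hne : x - y ≠ 0 := sub_ne_zero.mpr h.ne'
    rw [eq_div_iff hne] at hc
    linarith [hc]

theorem flow_lipschitz_log_norm_bound {d : ℕ} (σ : ℝ → ℝ) (α : ℝ) (hα : 0 < α) (hα1 : α ≤ 1)
    (hdiff : Differentiable ℝ σ) (hσ' : ∀ t : ℝ, deriv σ t ∈ Set.Icc α 1)
    (A : Matrix (Fin d) (Fin d) ℝ) (b : Fin d → ℝ) (δs : ℝ)
    (hδs : IsGreatest {c | ∃ D : Matrix (Fin d) (Fin d) ℝ,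
      (∀ i, D i i ∈ Set.Icc α 1) ∧ (∀ i j, i ≠ j → D i j = 0) ∧ c = mu2 (D * A)} δs)
    (z zb : ℝ → Fin d → ℝ)
    (hz : ∀ t ∈ Set.Icc (0:ℝ) 1, ∀ i : Fin d,
      HasDerivWithinAt (fun s => z s i) (σ (A.mulVec (z t) i + b i)) (Set.Icc 0 1) t)
    (hzb : ∀ t ∈ Set.Icc (0:ℝ) 1, ∀ i : Fin d,
      HasDerivWithinAt (fun s => zb s i) (σ (A.mulVec (zb t) i + b i)) (Set.Icc 0 1) t) :
    norm2 (z 1 - zb 1) ≤ Real.exp δs * norm2 (z 0 - zb 0) := by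
  classical
  rcases Nat.eq_zero_or_pos d with hd | hd
  · subst hd
    simp only [norm2, Finset.univ_eq_empty, Finset.sum_empty, Real.sqrt_zero, mul_zero, le_refl]
  haveI : Nonempty (Fin d) := Fin.pos_iff_nonempty.mp hd
  choose k hk1 hk2 using slope_exists σ α hdiff hσ'
  set E : ℝ → ℝ := fun t => ∑ i, (z t i - zb t i)^2 with hE_def
  set E' : ℝ → ℝ := fun t => ∑ i, 2 * (z t i - zb t i) *
      (σ (A.mulVec (z t) i + b i) - σ (A.mulVec (zb t) i + b i)) with hE'_def
  have hE : ∀ t ∈ Set.Icc (0:ℝ) 1, HasDerivWithinAt E (E' t) (Set.Icc 0 1) t := by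
    intro t ht
    have hsum := HasDerivWithinAt.sum (u := Finset.univ)
      (A := fun i s => (z s i - zb s i)^2)
      (A' := fun i => 2 * (z t i - zb t i) *
        (σ (A.mulVec (z t) i + b i) - σ (A.mulVec (zb t) i + b i)))
      (fun i _ => by
        have h := ((hz t ht i).sub (hzb t ht i)).pow 2
        simpa [Pi.sub_def, Pi.pow_def] using h.congr_deriv (by push_cast [Pi.sub_apply]; ring))
    exact (show (∑ i, fun s => (z s i - zb s i)^2) = E by ext s; simp [hE_def, Finset.sum_apply]) ▸ hsum
  have hE0 : ∀ t, 0 ≤ E t := fun t => Finset.sum_nonneg fun i _ => sq_nonneg _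
  have key : ∀ t, E' t ≤ 2 * δs * E t := by
    intro t
    set e : Fin d → ℝ := fun i => z t i - zb t i with he
    set Df : Fin d → ℝ := fun i => k (A.mulVec (zb t) i + b i) (A.mulVec (z t) i + b i) with hDf
    set Dm : Matrix (Fin d) (Fin d) ℝ := Matrix.diagonal Df with hDm
    have he2 : e = z t - zb t := rfl
    have hq : ∀ i, A.mulVec (z t) i + b i - (A.mulVec (zb t) i + b i) = A.mulVec e i := by
      intro i
      rw [he2, Matrix.mulVec_sub]
      simp [Pi.sub_apply]
    have hσd : ∀ i, σ (A.mulVec (z t) i + b i) - σ (A.mulVec (zb t) i + b i)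
        = Df i * A.mulVec e i := fun i => by
      rw [hDf]
      rw [hk2 (A.mulVec (zb t) i + b i) (A.mulVec (z t) i + b i), hq i]
    have hDA : ∀ i, (Dm * A).mulVec e i = Df i * A.mulVec e i := fun i => by
      rw [← Matrix.mulVec_mulVec, hDm, Matrix.mulVec_diagonal]
    have hE'eq : E' t = 2 * inner2 e ((Dm * A).mulVec e) := by
      simp only [hE'_def, inner2, Finset.mul_sum]
      exact Finset.sum_congr rfl fun i _ => by rw [hσd i, ← hDA i]; ring
    have hray := quad_le_mu2 (Dm * A) e
    have hmu : mu2 (Dm * A) ≤ δs := by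
      apply hδs.2
      refine ⟨Dm, fun i => ?_, fun i j hij => Matrix.diagonal_apply_ne _ hij, rfl⟩
      rw [hDm, Matrix.diagonal_apply_eq]
      exact hk1 _ _
    have hee : inner2 e e = E t := by
      simp only [inner2, hE_def, he, sq]
    rw [hE'eq]
    rw [hee] at hray
    nlinarith [hE0 t, hray, hmu]
  set g : ℝ → ℝ := fun t => E t * Real.exp (-2*δs*t) with hg_def
  set g' : ℝ → ℝ := fun t => (E' t - 2*δs*E t) * Real.exp (-2*δs*t) with hg'_def
  have hint : interior (Set.Icc (0:ℝ) 1) = Set.Ioo 0 1 := interior_Icc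
  have hgderiv : ∀ t ∈ interior (Set.Icc (0:ℝ) 1),
      HasDerivWithinAt g (g' t) (interior (Set.Icc (0:ℝ) 1)) t := by
    intro t ht
    rw [hint] at ht ⊢
    have h1 : HasDerivWithinAt E (E' t) (Set.Ioo 0 1) t :=
      (hE t (Set.Ioo_subset_Icc_self ht)).mono Set.Ioo_subset_Icc_self
    have h2 : HasDerivAt (fun s => Real.exp (-2*δs*s)) (Real.exp (-2*δs*t) * (-2*δs)) t := by
      have h3 := ((hasDerivAt_id t).const_mul (-2*δs)).exp
      simpa using h3
    have h4 := h1.mul h2.hasDerivWithinAt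
    have h5 : E' t * Real.exp (-2*δs*t) + E t * (Real.exp (-2*δs*t) * (-2*δs)) = g' t := by
      rw [hg'_def]; ring
    rw [h5] at h4
    exact h4
  have hcont : ContinuousOn g (Set.Icc (0:ℝ) 1) := by
    have hEc : ContinuousOn E (Set.Icc (0:ℝ) 1) := fun t ht => (hE t ht).continuousWithinAt
    exact hEc.mul ((Real.continuous_exp.comp (continuous_const.mul continuous_id)).continuousOn)
  have hanti : AntitoneOn g (Set.Icc (0:ℝ) 1) :=
    antitoneOn_of_hasDerivWithinAt_nonpos (convex_Icc 0 1) hcont hgderiv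
      (fun t _ => mul_nonpos_of_nonpos_of_nonneg (by linarith [key t]) (Real.exp_nonneg _))
  have h01 : g 1 ≤ g 0 :=
    hanti (Set.left_mem_Icc.mpr zero_le_one) (Set.right_mem_Icc.mpr zero_le_one) zero_le_one
  have hE1 : E 1 ≤ Real.exp (2*δs) * E 0 := by
    simp only [hg_def, mul_one, mul_zero, Real.exp_zero] at h01
    have hmul : Real.exp (-2*δs) * Real.exp (2*δs) = 1 := by
      rw [← Real.exp_add]; norm_num
    nlinarith [mul_le_mul_of_nonneg_right h01 (Real.exp_nonneg (2*δs)), hmul,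
      Real.exp_pos (2*δs), hE0 0, hE0 1]
  have hnorm : ∀ t, norm2 (z t - zb t) = Real.sqrt (E t) := fun t => by
    simp only [norm2, hE_def, Pi.sub_apply]
  rw [hnorm, hnorm]
  have h2 : Real.sqrt (E 1) ≤ Real.sqrt (Real.exp (2*δs) * E 0) := Real.sqrt_le_sqrt hE1
  have h3 : Real.sqrt (Real.exp (2*δs) * E 0) = Real.exp δs * Real.sqrt (E 0) := by
    rw [Real.sqrt_mul (Real.exp_nonneg _)]
    congr 1
    rw [show Real.exp (2*δs) = Real.exp δs ^ 2 from by rw [sq, ← Real.exp_add]; ring_nf,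
      Real.sqrt_sq (Real.exp_nonneg _)]
  linarith
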